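/- Let w be a prefix of the infinite m-bonacci word h_ω with |u_n| + |t_n| < |w| ≤ |u_{n+1}| for the unique such n ≥ 2 (a prefix of type-1). Then w is closed; more precisely, writing w = u_n t_n x with x a non-empty prefix of h_{n-2}^R, the word u_{n-1} x is a border of w with no internal occurrence in w. -/

import Mathlib

/-- The `m`-bonacci morphism on letters: `i ↦ 0(i+1)` for `i ≤ m-2`, `(m-1) ↦ 0`. -/
def phi (m a : ℕ) : List ℕ := if a = m - 1 then [0] else [0, a + 1]

/-- The `m`-bonacci morphism on words. -/
def phiW (m : ℕ) (w : List ℕ) : List ℕ := w.flatMap (phi m)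

/-- The finite `m`-bonacci words `h_n = φ_m^n(0)`. -/
def hb (m : ℕ) : ℕ → List ℕ
  | 0 => [0]
  | n+1 => phiW m (hb m n)

/-- The palindromic prefixes of the `m`-bonacci word, shifted:
`ub m n` is the paper's `u_{n+1}` (so `ub m 0 = u₁ = ε`, and `u_{n+2} = h_n u_{n+1}`). -/
def ub (m : ℕ) : ℕ → List ℕ
  | 0 => []
  | n+1 => hb m n ++ ub m n

/-- Number of occurrences of `x` as a factor of `w` (counted by starting position). -/
def occ (x w : List ℕ) : ℕ :=
  ((List.range (w.length + 1)).filter (fun i => x.isPrefixOf (w.drop i))).length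

/-- A word is closed if it is a single letter or has a border (a proper factor that
is both a prefix and a suffix) occurring exactly twice in it. -/
def ClosedWord (w : List ℕ) : Prop :=
  w.length = 1 ∨
    ∃ x : List ℕ, x ≠ [] ∧ x.length < w.length ∧ x <+: w ∧ x <:+ w ∧ occ x w = 2

/-- The word `t_n` (for `n ≥ 2`), defined by `h_{n-1}^R = t_n h_{n-2}^R`, so that
`u_{n+1} = u_n t_n h_{n-2}^R`; explicitly `t_n = (n-1) h₀^R ⋯ h_{n-3}^R` for
`2 ≤ n ≤ m-1` and `t_n = h_{n-m-1}^R h_{n-m}^R ⋯ h_{n-3}^R` for `n ≥ m`. -/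
def tb (m n : ℕ) : List ℕ :=
  ((hb m (n - 1)).reverse).take ((hb m (n - 1)).length - (hb m (n - 2)).length)

lemma phiW_nil (m : ℕ) : phiW m [] = [] := rfl
lemma phiW_cons (m a : ℕ) (w : List ℕ) : phiW m (a :: w) = phi m a ++ phiW m w := rfl
lemma phiW_append (m : ℕ) (u v : List ℕ) : phiW m (u ++ v) = phiW m u ++ phiW m v := by
  simp [phiW]
lemma phi_ne_nil (m a : ℕ) : phi m a ≠ [] := by
  unfold phi; split <;> simp
lemma phi_zero (m : ℕ) (hm : 2 ≤ m) : phi m 0 = [0, 1] := by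
  unfold phi; rw [if_neg]; omega
lemma hb_succ (m k : ℕ) : hb m (k + 1) = phiW m (hb m k) := rfl
lemma ub_succ (m k : ℕ) : ub m (k + 1) = hb m k ++ ub m k := rfl

lemma hb_head (m : ℕ) (hm : 2 ≤ m) (k : ℕ) : ∃ t, hb m k = 0 :: t := by
  induction k with
  | zero => exact ⟨[], rfl⟩
  | succ k ih =>
    obtain ⟨t, ht⟩ := ih
    refine ⟨1 :: phiW m t, ?_⟩
    rw [hb_succ, ht, phiW_cons, phi_zero m hm]; rfl

lemma hb_ne_nil (m : ℕ) (hm : 2 ≤ m) (k : ℕ) : hb m k ≠ [] := by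
  obtain ⟨t, ht⟩ := hb_head m hm k; simp [ht]

lemma ub_phiW (m k : ℕ) : ub m (k + 1) = phiW m (ub m k) ++ [0] := by
  induction k with
  | zero => simp [ub, hb, phiW]
  | succ k ih =>
    calc ub m (k+1+1) = hb m (k+1) ++ ub m (k+1) := rfl
    _ = phiW m (hb m k) ++ (phiW m (ub m k) ++ [0]) := by rw [ih]; rfl
    _ = phiW m (hb m k ++ ub m k) ++ [0] := by rw [phiW_append, List.append_assoc]
    _ = phiW m (ub m (k+1)) ++ [0] := rfl

lemma hb_eq_ub (m : ℕ) (hm : 2 ≤ m) : ∀ k, k ≤ m - 1 → hb m k = ub m k ++ [k] := by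
  intro k
  induction k with
  | zero => intro _; rfl
  | succ k ih =>
    intro hk
    have hk' : k ≤ m - 1 := by omega
    rw [hb_succ, ih hk', phiW_append, phiW_cons, phiW_nil]
    have : phi m k = [0, k+1] := by unfold phi; rw [if_neg]; omega
    rw [this, ub_phiW]
    simp

lemma mod_succ (m k : ℕ) (hm : 2 ≤ m) :
    (k+1) % m = if k % m = m - 1 then 0 else k % m + 1 := by
  have h1 : k % m < m := Nat.mod_lt _ (by omega)
  have h2 : (k+1) % m = (k % m + 1) % m := by
    rw [Nat.add_mod, Nat.mod_eq_of_lt (show 1 < m by omega)]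
  split
  · next h =>
    rw [h2, h, Nat.sub_add_cancel (by omega), Nat.mod_self]
  · next h =>
    rw [h2, Nat.mod_eq_of_lt (by omega)]

lemma hb_m_eq_ub (m : ℕ) (hm : 2 ≤ m) : hb m m = ub m m := by
  obtain ⟨k, rfl⟩ : ∃ k, m = k + 1 := ⟨m - 1, by omega⟩
  rw [hb_succ, hb_eq_ub (k+1) hm k (by omega), phiW_append, phiW_cons, phiW_nil]
  have : phi (k+1) k = [0] := by unfold phi; rw [if_pos (by omega)]
  rw [this, ub_phiW]
  simp

lemma hb_last (m : ℕ) (hm : 2 ≤ m) (k : ℕ) : ∃ q, hb m k = q ++ [k % m] := by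
  induction k with
  | zero => exact ⟨[], by simp [hb, Nat.mod_eq_of_lt (by omega : 0 < m)]⟩
  | succ k ih =>
    obtain ⟨q, hq⟩ := ih
    rw [hb_succ, hq, phiW_append, phiW_cons, phiW_nil]
    by_cases h : k % m = m - 1
    · have : phi m (k % m) = [0] := by unfold phi; rw [if_pos h]
      refine ⟨phiW m q, ?_⟩
      rw [this]
      have h2 : (k+1) % m = 0 := by rw [mod_succ m k hm, if_pos h]
      rw [h2]; simp
    · have : phi m (k % m) = [0, k % m + 1] := by unfold phi; rw [if_neg h]
      refine ⟨phiW m q ++ [0], ?_⟩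
      rw [this]
      have h2 : (k+1) % m = k % m + 1 := by rw [mod_succ m k hm, if_neg h]
      rw [h2]; simp

lemma ub_hb (m : ℕ) (hm : 2 ≤ m) : ∀ k, m ≤ k → ub m k = hb m k ++ ub m (k - m) := by
  intro k
  induction k with
  | zero => intro h; omega
  | succ k ih =>
    intro hk
    by_cases h : m ≤ k
    · have := ih h
      rw [ub_phiW, this, phiW_append, hb_succ, List.append_assoc, ← ub_phiW]
      congr 2
      omega
    · have : k + 1 = m := by omega
      rw [this, hb_m_eq_ub m hm]
      simp [ub]

lemma ub_reverse (m : ℕ) (hm : 2 ≤ m) : ∀ k, (ub m k).reverse = ub m k := by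
  intro k
  induction k using Nat.strong_induction_on with
  | _ k IH =>
    match k with
    | 0 => rfl
    | k + 1 =>
      have IHk := IH k (by omega)
      rw [ub_succ, List.reverse_append, IHk]
      by_cases h : k ≤ m - 1
      · rw [hb_eq_ub m hm k h, List.reverse_append, IHk]
        simp
      · have hk : m ≤ k := by omega
        have hB := ub_hb m hm k hk
        have IHkm := IH (k - m) (by omega)
        have hrev : ub m k = ub m (k - m) ++ (hb m k).reverse := by
          conv_lhs => rw [← IHk]
          rw [hB, List.reverse_append, IHkm]
        calc ub m k ++ (hb m k).reverse
            = hb m k ++ (ub m (k-m) ++ (hb m k).reverse) := by rw [hB, List.append_assoc]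
        _ = hb m k ++ ub m k := by rw [← hrev]

lemma ub_alt (m : ℕ) (hm : 2 ≤ m) (k : ℕ) :
    ub m (k + 1) = ub m k ++ (hb m k).reverse := by
  conv_lhs => rw [← ub_reverse m hm (k+1)]
  rw [ub_succ, List.reverse_append, ub_reverse m hm k]

lemma length_phiW_ge (m : ℕ) (hm : 2 ≤ m) (w : List ℕ) :
    w.length + w.count 0 ≤ (phiW m w).length := by
  induction w with
  | nil => simp [phiW]
  | cons a w ih =>
    rw [phiW_cons, List.length_append]
    have h1 : 1 ≤ (phi m a).length := by
      have := phi_ne_nil m a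
      cases h : phi m a with
      | nil => exact absurd h this
      | cons b t => simp
    by_cases h : a = 0
    · subst h
      rw [phi_zero m hm]
      simp only [List.count_cons, List.length_cons, beq_self_eq_true, if_true]
      omega
    · have : (a == 0) = false := by simp [h]
      simp only [List.count_cons, List.length_cons, this, Bool.false_eq_true, if_false]
      omega

lemma count0_phi (m a : ℕ) : (phi m a).count 0 = 1 := by
  unfold phi; split <;> simp

lemma count0_phiW (m : ℕ) (w : List ℕ) : (phiW m w).count 0 = w.length := by
  induction w with
  | nil => simp [phiW]
  | cons a w ih =>
    rw [phiW_cons, List.count_append, count0_phi, ih]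
    simp [Nat.add_comm]

lemma count0_hb (m : ℕ) (k : ℕ) : (hb m (k+1)).count 0 = (hb m k).length := by
  rw [hb_succ, count0_phiW]

lemma length_phiW_mono (m : ℕ) (w : List ℕ) : w.length ≤ (phiW m w).length := by
  induction w with
  | nil => simp [phiW]
  | cons a w ih =>
    rw [phiW_cons, List.length_append]
    have h1 : 1 ≤ (phi m a).length := by
      have := phi_ne_nil m a
      cases h : phi m a with
      | nil => exact absurd h this
      | cons b t => simp
    simp only [List.length_cons]
    omega

lemma hb_len_mono (m : ℕ) (k : ℕ) : (hb m k).length ≤ (hb m (k+1)).length := by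
  rw [hb_succ]; exact length_phiW_mono m _

lemma hb_len_rec (m : ℕ) (hm : 2 ≤ m) (k : ℕ) :
    (hb m (k+1)).length + (hb m k).length ≤ (hb m (k+2)).length := by
  have h1 := length_phiW_ge m hm (hb m (k+1))
  rw [count0_hb] at h1
  rw [show k+2 = (k+1)+1 from rfl, hb_succ]
  exact h1

lemma hb_len_pos (m : ℕ) (hm : 2 ≤ m) (k : ℕ) : 1 ≤ (hb m k).length := by
  obtain ⟨t, ht⟩ := hb_head m hm k; simp [ht]

lemma ub_len (m k : ℕ) : (ub m (k+1)).length = (hb m k).length + (ub m k).length := by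
  rw [ub_succ, List.length_append]

lemma ub_len_lt (m : ℕ) (hm : 2 ≤ m) (k : ℕ) (hk : 1 ≤ k) :
    (ub m k).length + 2 ≤ (hb m (k+1)).length := by
  induction k with
  | zero => omega
  | succ k ih =>
    by_cases h : k = 0
    · subst h
      show (ub m 1).length + 2 ≤ (hb m 2).length
      have h1 : (hb m 1).length + (hb m 0).length ≤ (hb m 2).length := hb_len_rec m hm 0
      have h1' : (hb m 1).length = 2 := by
        rw [hb_succ, show hb m 0 = [0] from rfl, phiW_cons, phiW_nil, phi_zero m hm]
        rfl
      have h2 : (ub m 1).length = 1 := rfl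
      have h0 : (hb m 0).length = 1 := rfl
      omega
    · have ih' := ih (by omega)
      have h1 : (hb m (k+1)).length + (hb m k).length ≤ (hb m (k+1+1)).length :=
        hb_len_rec m hm k
      rw [ub_len]
      have hmono : (hb m k).length ≤ (hb m (k+1)).length := hb_len_mono m k
      omega

lemma phi_head (m a : ℕ) : ∃ s, phi m a = 0 :: s := by
  unfold phi; split
  · exact ⟨[], rfl⟩
  · exact ⟨[a+1], rfl⟩

lemma phiW_head (m a : ℕ) (r : List ℕ) : ∃ t, phiW m (a :: r) = 0 :: t := by
  obtain ⟨s, hs⟩ := phi_head m a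
  exact ⟨s ++ phiW m r, by rw [phiW_cons, hs]; rfl⟩

lemma hb1 (m : ℕ) (hm : 2 ≤ m) : hb m 1 = [0, 1] := by
  rw [hb_succ, show hb m 0 = [0] from rfl, phiW_cons, phiW_nil, phi_zero m hm]; rfl

lemma ubp (m : ℕ) (hm : 2 ≤ m) : ∀ k, ub m k ++ [k % m] <+: hb m (k+1) := by
  intro k
  induction k with
  | zero =>
    rw [hb1 m hm]
    exact ⟨[1], by simp [ub, Nat.mod_eq_of_lt (by omega : 0 < m)]⟩
  | succ k ih =>
    obtain ⟨r, hr⟩ := ih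
    have hrne : r ≠ [] := by
      intro h
      subst h
      have hlen : (hb m (k+1)).length = (ub m k).length + 1 := by
        rw [← hr]; simp
      by_cases hk : k = 0
      · subst hk
        rw [hb1 m hm] at hlen
        simp [ub] at hlen
      · have := ub_len_lt m hm k (by omega)
        omega
    have hstep : hb m (k+1+1) = phiW m (ub m k) ++ (phi m (k % m) ++ phiW m r) := by
      rw [hb_succ, ← hr, phiW_append, phiW_append]
      simp [phiW_cons, phiW_nil]
    by_cases hc : k % m = m - 1
    · have hphi : phi m (k % m) = [0] := by unfold phi; rw [if_pos hc]
      have hmod : (k+1) % m = 0 := by rw [mod_succ m k hm, if_pos hc]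
      obtain ⟨a, r₂, rfl⟩ : ∃ a r₂, r = a :: r₂ := by
        cases r with
        | nil => exact absurd rfl hrne
        | cons a r₂ => exact ⟨a, r₂, rfl⟩
      obtain ⟨t, ht⟩ := phiW_head m a r₂
      rw [hstep, hphi, ht, hmod, ub_phiW]
      exact ⟨t, by simp⟩
    · have hphi : phi m (k % m) = [0, k % m + 1] := by unfold phi; rw [if_neg hc]
      have hmod : (k+1) % m = k % m + 1 := by rw [mod_succ m k hm, if_neg hc]
      rw [hstep, hphi, hmod, ub_phiW]
      exact ⟨phiW m r, by simp [hphi]⟩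

lemma ub_prefix_hb (m : ℕ) (hm : 2 ≤ m) (k : ℕ) : ub m k <+: hb m (k+1) :=
  List.IsPrefix.trans ⟨[k % m], rfl⟩ (ubp m hm k)

lemma phiW_prefix_mono (m : ℕ) {u v : List ℕ} (h : u <+: v) : phiW m u <+: phiW m v := by
  obtain ⟨r, rfl⟩ := h
  rw [phiW_append]
  exact ⟨phiW m r, rfl⟩

lemma hb_prefix_succ (m : ℕ) (hm : 2 ≤ m) (k : ℕ) : hb m k <+: hb m (k+1) := by
  induction k with
  | zero => rw [hb1 m hm]; exact ⟨[1], rfl⟩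
  | succ k ih =>
    rw [hb_succ, hb_succ]
    exact phiW_prefix_mono m ih

lemma hb_prefix_mono (m : ℕ) (hm : 2 ≤ m) {k l : ℕ} (h : k ≤ l) : hb m k <+: hb m l := by
  induction l, h using Nat.le_induction with
  | base => exact List.prefix_rfl
  | succ l hl ih => exact ih.trans (hb_prefix_succ m hm l)

lemma phiW_eq_nil {m : ℕ} {P : List ℕ} (h : phiW m P = []) : P = [] := by
  cases P with
  | nil => rfl
  | cons a t =>
    rw [phiW_cons] at h
    obtain ⟨s, hs⟩ := phi_head m a
    rw [hs] at h
    simp at h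

lemma zhead_phiW {m : ℕ} {Q : List ℕ} (h : Q ≠ []) : ∃ r, phiW m Q = 0 :: r := by
  cases Q with
  | nil => exact absurd rfl h
  | cons a t => exact phiW_head m a t

lemma zhead_phiW_app0 (m : ℕ) (Q : List ℕ) : ∃ r, phiW m Q ++ [0] = 0 :: r := by
  cases Q with
  | nil => exact ⟨[], rfl⟩
  | cons a t =>
    obtain ⟨r, hr⟩ := phiW_head m a t
    exact ⟨r ++ [0], by rw [hr]; rfl⟩

lemma phi_cancel (m : ℕ) (p b : ℕ) (L R : List ℕ)
    (hL : (∃ r, L = 0 :: r) ∨ (L = [] ∧ p ≠ m - 1))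
    (hR : ∃ r, R = 0 :: r)
    (h : phi m p ++ L <+: phi m b ++ R) : p = b ∧ L <+: R := by
  obtain ⟨r, hr⟩ := hR
  by_cases hp : p = m - 1 <;> by_cases hbb : b = m - 1
  · rw [show phi m p = [0] from by unfold phi; rw [if_pos hp],
       show phi m b = [0] from by unfold phi; rw [if_pos hbb]] at h
    simp only [List.singleton_append, List.cons_prefix_cons] at h
    exact ⟨hp.trans hbb.symm, h.2⟩
  · obtain ⟨l, hl⟩ : ∃ l, L = 0 :: l := by
      rcases hL with h1 | ⟨_, h2⟩
      · exact h1
      · exact absurd hp h2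
    rw [show phi m p = [0] from by unfold phi; rw [if_pos hp],
       show phi m b = [0, b+1] from by unfold phi; rw [if_neg hbb], hl, hr] at h
    simp only [List.cons_append, List.nil_append, List.cons_prefix_cons] at h
    omega
  · rw [show phi m p = [0, p+1] from by unfold phi; rw [if_neg hp],
       show phi m b = [0] from by unfold phi; rw [if_pos hbb], hr] at h
    simp only [List.cons_append, List.nil_append, List.cons_prefix_cons] at h
    omega
  · rw [show phi m p = [0, p+1] from by unfold phi; rw [if_neg hp],
       show phi m b = [0, b+1] from by unfold phi; rw [if_neg hbb]] at h
    simp only [List.cons_append, List.nil_append, List.cons_prefix_cons] at h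
    obtain ⟨-, h2, h3⟩ := h
    exact ⟨by omega, h3⟩

lemma decode1 (m : ℕ) : ∀ z P : List ℕ,
    phiW m P ++ [0] <+: phiW m z ++ [0] → P <+: z := by
  intro z
  induction z with
  | nil =>
    intro P h
    have hlen := h.length_le
    simp only [List.length_append, phiW_nil] at hlen
    have : phiW m P = [] := by
      cases hP : phiW m P with
      | nil => rfl
      | cons a t => rw [hP] at hlen; simp at hlen
    rw [phiW_eq_nil this]
  | cons b z' ih =>
    intro P h
    cases P with
    | nil => exact List.nil_prefix
    | cons p P' =>
      rw [phiW_cons, phiW_cons, List.append_assoc, List.append_assoc] at h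
      have hc := phi_cancel m p b _ _ (Or.inl (zhead_phiW_app0 m P'))
        (zhead_phiW_app0 m z') h
      rw [hc.1, List.cons_prefix_cons]
      exact ⟨rfl, ih P' hc.2⟩

lemma decode2 (m : ℕ) : ∀ z P : List ℕ, ∀ a : ℕ, a ≠ m - 1 →
    phiW m (P ++ [a]) <+: phiW m z ++ [0] → P ++ [a] <+: z := by
  intro z
  induction z with
  | nil =>
    intro P a ha h
    exfalso
    have hlen := h.length_le
    rw [phiW_append, phiW_cons, phiW_nil,
      show phi m a = [0, a+1] from by unfold phi; rw [if_neg ha]] at hlen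
    simp at hlen
  | cons b z' ih =>
    intro P a ha h
    cases P with
    | nil =>
      have h' : phi m a ++ [] <+: phi m b ++ (phiW m z' ++ [0]) := by
        simpa [phiW_cons, phiW_nil, List.append_assoc] using h
      have hc := phi_cancel m a b _ _ (Or.inr ⟨rfl, ha⟩) (zhead_phiW_app0 m z') h'
      rw [List.nil_append, hc.1, List.cons_prefix_cons]
      exact ⟨rfl, List.nil_prefix⟩
    | cons p P' =>
      have h' : phi m p ++ phiW m (P' ++ [a]) <+: phi m b ++ (phiW m z' ++ [0]) := by
        simpa [phiW_cons, List.append_assoc] using h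
      have hL : ∃ r, phiW m (P' ++ [a]) = 0 :: r := zhead_phiW (by simp)
      have hc := phi_cancel m p b _ _ (Or.inl hL) (zhead_phiW_app0 m z') h'
      rw [List.cons_append, hc.1, List.cons_prefix_cons]
      exact ⟨rfl, ih P' a ha hc.2⟩

lemma desync (m : ℕ) : ∀ (v : List ℕ) (i : ℕ) (r : List ℕ),
    (phiW m v).drop i = 0 :: r →
    ∃ i', i = (phiW m (v.take i')).length ∧ (phiW m v).drop i = phiW m (v.drop i') := by
  intro v
  induction v with
  | nil => intro i r h; rw [phiW_nil, List.drop_nil] at h; exact absurd h (by simp)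
  | cons a v' ih =>
    intro i r h
    match i with
    | 0 => exact ⟨0, by simp [phiW_nil], by simp⟩
    | i + 1 =>
      by_cases ha : a = m - 1
      · have hphi : phi m a = [0] := by unfold phi; rw [if_pos ha]
        have h' : (phiW m v').drop i = 0 :: r := by
          rw [phiW_cons, hphi] at h
          simpa using h
        obtain ⟨i'', h1, h2⟩ := ih i r h'
        refine ⟨i'' + 1, ?_, ?_⟩
        · rw [List.take_succ_cons, phiW_cons, hphi, List.length_append, h1]
          simp only [List.length_cons, List.length_nil]
          omega
        · rw [List.drop_succ_cons, phiW_cons, hphi]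
          show (([0] ++ phiW m v').drop (i+1)) = _
          simpa using h2
      · have hphi : phi m a = [0, a+1] := by unfold phi; rw [if_neg ha]
        match i with
        | 0 =>
          exfalso
          rw [phiW_cons, hphi] at h
          simp at h
        | i + 1 =>
          have h' : (phiW m v').drop i = 0 :: r := by
            rw [phiW_cons, hphi] at h
            simpa using h
          obtain ⟨i'', h1, h2⟩ := ih i r h'
          refine ⟨i'' + 1, ?_, ?_⟩
          · rw [List.take_succ_cons, phiW_cons, hphi, List.length_append, h1]
            simp only [List.length_cons, List.length_nil]
            omega
          · rw [List.drop_succ_cons, phiW_cons, hphi]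
            show (([0, a+1] ++ phiW m v').drop (i+1+1)) = _
            simpa using h2

lemma ub_head (m : ℕ) (hm : 2 ≤ m) (k : ℕ) : ∃ t, ub m (k+1) = 0 :: t := by
  obtain ⟨t, ht⟩ := hb_head m hm k
  exact ⟨t ++ ub m k, by rw [ub_succ, ht]; rfl⟩

lemma Rlem (m : ℕ) (hm : 2 ≤ m) : ∀ J i : ℕ,
    (ub m J ++ [J % m]) <+: ((hb m (J+1) ++ ub m J ++ [J % m]).drop i) →
    i = 0 ∨ i = (hb m (J+1)).length := by
  intro J
  induction J with
  | zero =>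
    intro i h
    have h0 : (0 : ℕ) % m = 0 := Nat.zero_mod m
    rw [h0, hb1 m hm] at h
    have hw : ([0, 1] ++ ub m 0 ++ [0] : List ℕ) = [0, 1, 0] := rfl
    rw [hw] at h
    simp only [ub] at h
    rw [hb1 m hm]
    match i with
    | 0 => left; rfl
    | 1 =>
      exfalso
      simp only [List.nil_append, List.drop_succ_cons, List.drop_zero] at h
      rw [List.cons_prefix_cons] at h
      exact absurd h.1 (by omega)
    | 2 => right; rfl
    | (k+3) =>
      exfalso
      have : ([0, 1, 0] : List ℕ).drop (k+3) = [] := by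
        rw [List.drop_eq_nil_iff]
        simp
      rw [this] at h
      have := h.length_le
      simp at this
  | succ J ih =>
    intro i h
    set c := J % m with hc_def
    have hubJ1 : ub m (J+1) = phiW m (ub m J) ++ [0] := ub_phiW m J
    have hPheadl : ∃ t, ub m (J+1) ++ [(J+1) % m] = 0 :: t := by
      obtain ⟨t, ht⟩ := ub_head m hm J
      exact ⟨t ++ [(J+1) % m], by rw [ht]; rfl⟩
    have hlenP : 2 ≤ (ub m (J+1) ++ [(J+1) % m]).length := by
      rw [List.length_append, ub_len]
      have := hb_len_pos m hm J
      simp only [List.length_cons, List.length_nil]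
      omega
    set W' : List ℕ := hb m (J+1) ++ ub m J ++ [c] with hW'_def
    have hlenW := h.length_le
    rw [List.length_drop] at hlenW
    by_cases hc : c = m - 1
    · -- case B : phi c = [0]
      have hphi : phi m c = [0] := by unfold phi; rw [if_pos hc]
      have hmod : (J+1) % m = 0 := by rw [mod_succ m J hm, if_pos hc]
      have hphiWc : phiW m [c] = [0] := by simp [phiW_cons, phiW_nil, hphi]
      have hW : hb m (J+1+1) ++ ub m (J+1) ++ [(J+1) % m] = phiW m W' ++ [0] := by
        rw [hmod, hW'_def, phiW_append, phiW_append, hphiWc, hubJ1, hb_succ]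
        all_goals simp [List.append_assoc]
      have hP : ub m (J+1) ++ [(J+1) % m] = phiW m (ub m J ++ [c]) ++ [0] := by
        rw [hmod, phiW_append, hphiWc, hubJ1]
        all_goals simp [List.append_assoc]
      have hWlen : (hb m (J+1+1) ++ ub m (J+1) ++ [(J+1) % m]).length
          = (phiW m W').length + 1 := by rw [hW]; simp
      have hiA : i < (phiW m W').length := by omega
      have hdrop : (hb m (J+1+1) ++ ub m (J+1) ++ [(J+1) % m]).drop i
          = (phiW m W').drop i ++ [0] := by
        rw [hW, List.drop_append_of_le_length (le_of_lt hiA)]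
      obtain ⟨t, hPt⟩ := hPheadl
      have hdz : ∃ r, (phiW m W').drop i = 0 :: r := by
        cases hdd : (phiW m W').drop i with
        | nil =>
          exfalso
          have := congrArg List.length hdd
          rw [List.length_drop] at this
          simp at this
          omega
        | cons d d' =>
          have h2 := h
          rw [hdrop, hPt, hdd] at h2
          rw [List.cons_append, List.cons_prefix_cons] at h2
          exact ⟨d', by rw [← h2.1]⟩
      obtain ⟨r, hr⟩ := hdz
      obtain ⟨i', hi1, hi2⟩ := desync m W' i r hr
      have hdec : ub m J ++ [c] <+: W'.drop i' := by
        apply decode1 m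
        rw [← hi2]
        rw [hdrop, hP] at h
        exact h
      rcases ih i' hdec with h0 | hF
      · left
        rw [hi1, h0]
        simp [phiW_nil]
      · right
        rw [hi1, hF]
        have htake : W'.take (hb m (J+1)).length = hb m (J+1) := by
          rw [hW'_def, List.append_assoc]
          exact List.take_left
        rw [htake]
        rfl
    · -- case A : phi c = [0, c+1]
      have hphi : phi m c = [0, c+1] := by unfold phi; rw [if_neg hc]
      have hmod : (J+1) % m = c + 1 := by rw [mod_succ m J hm, if_neg hc]
      have hphiWc : phiW m [c] = [0, c+1] := by simp [phiW_cons, phiW_nil, hphi]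
      have hW : hb m (J+1+1) ++ ub m (J+1) ++ [(J+1) % m] = phiW m W' := by
        rw [hmod, hW'_def, phiW_append, phiW_append, hphiWc, hubJ1, hb_succ]
        all_goals simp [List.append_assoc]
      have hP : ub m (J+1) ++ [(J+1) % m] = phiW m (ub m J ++ [c]) := by
        rw [hmod, phiW_append, hphiWc, hubJ1]
        all_goals simp [List.append_assoc]
      have hWlen : (hb m (J+1+1) ++ ub m (J+1) ++ [(J+1) % m]).length
          = (phiW m W').length := by rw [hW]
      have hiA : i < (phiW m W').length := by omega
      have hdrop : (hb m (J+1+1) ++ ub m (J+1) ++ [(J+1) % m]).drop i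
          = (phiW m W').drop i := by rw [hW]
      obtain ⟨t, hPt⟩ := hPheadl
      have hdz : ∃ r, (phiW m W').drop i = 0 :: r := by
        cases hdd : (phiW m W').drop i with
        | nil =>
          exfalso
          have := congrArg List.length hdd
          rw [List.length_drop] at this
          simp at this
          omega
        | cons d d' =>
          have h2 := h
          rw [hdrop, hPt, hdd] at h2
          rw [List.cons_prefix_cons] at h2
          exact ⟨d', by rw [← h2.1]⟩
      obtain ⟨r, hr⟩ := hdz
      obtain ⟨i', hi1, hi2⟩ := desync m W' i r hr
      have hdec : ub m J ++ [c] <+: W'.drop i' := by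
        apply decode2 m _ _ c hc
        rw [hdrop, hP, hi2] at h
        exact h.trans (List.prefix_append _ _)
      rcases ih i' hdec with h0 | hF
      · left
        rw [hi1, h0]
        simp [phiW_nil]
      · right
        rw [hi1, hF]
        have htake : W'.take (hb m (J+1)).length = hb m (J+1) := by
          rw [hW'_def, List.append_assoc]
          exact List.take_left
        rw [htake]
        rfl

lemma filter_len_one (p : ℕ → Bool) (F : ℕ)
    (hp : ∀ i, p i = true ↔ (i = 0 ∨ i = F)) :
    ∀ K, 0 < K → K ≤ F → ((List.range K).filter p).length = 1 := by
  intro K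
  induction K with
  | zero => omega
  | succ K ih =>
    intro _ hKF
    rw [List.range_succ, List.filter_append, List.length_append]
    by_cases hK : K = 0
    · subst hK
      have h0 : p 0 = true := (hp 0).mpr (Or.inl rfl)
      simp [h0]
    · have hpK : p K = false := by
        cases hpk : p K with
        | false => rfl
        | true =>
          have := (hp K).mp hpk
          omega
      rw [ih (by omega) (by omega)]
      simp [hpK]

lemma filter_len_two (N F : ℕ) (hF : 0 < F) (hFN : F < N) (p : ℕ → Bool)
    (hp : ∀ i, p i = true ↔ (i = 0 ∨ i = F)) :
    ((List.range N).filter p).length = 2 := by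
  induction N with
  | zero => omega
  | succ N ih =>
    rw [List.range_succ, List.filter_append, List.length_append]
    by_cases hN : F < N
    · rw [ih hN]
      have hpN : p N = false := by
        cases hpn : p N with
        | false => rfl
        | true =>
          have := (hp N).mp hpn
          omega
      simp [hpN]
    · have hFN' : F = N := by omega
      subst hFN'
      have h1 := filter_len_one p F hp F hF le_rfl
      have h2 : p F = true := (hp F).mpr (Or.inr rfl)
      rw [h1]
      simp [h2]

lemma occ_pair (x w : List ℕ) (F : ℕ) (hF : 0 < F) (hFle : F ≤ w.length)
    (hall : ∀ i, x <+: w.drop i → i = 0 ∨ i = F)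
    (h0 : x <+: w) (h1 : x <+: w.drop F) : occ x w = 2 := by
  unfold occ
  apply filter_len_two (w.length + 1) F hF (by omega)
  intro i
  rw [List.isPrefixOf_iff_prefix]
  constructor
  · exact hall i
  · rintro (rfl | rfl)
    · simpa using h0
    · exact h1

/-- a prefix `w` of the `m`-bonacci word `h_ω` with
`|u_n| + |t_n| < |w| ≤ |u_{n+1}|` (a type-1 prefix) is closed; more precisely,
`w = u_n t_n x` for a non-empty prefix `x` of `h_{n-2}^R`, and `u_{n-1} x` is a
border of `w` occurring exactly twice in `w` (no internal occurrence)
(here `ub m k` is the paper's `u_{k+1}`). -/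
theorem type1_prefix_closed :
    ∀ m : ℕ, 2 ≤ m → ∀ n : ℕ, 2 ≤ n → ∀ w : List ℕ,
      (∃ k : ℕ, w <+: hb m k) →
      (ub m (n - 1)).length + (tb m n).length < w.length →
      w.length ≤ (ub m n).length →
      ClosedWord w ∧
        ∃ x : List ℕ, x ≠ [] ∧ x <+: (hb m (n - 2)).reverse ∧
          w = ub m (n - 1) ++ tb m n ++ x ∧
          (ub m (n - 2) ++ x) <+: w ∧ (ub m (n - 2) ++ x) <:+ w ∧
          occ (ub m (n - 2) ++ x) w = 2 := by
  intro m hm n hn w hwpre hlt hle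
  obtain ⟨N, rfl⟩ : ∃ N, n = N + 2 := ⟨n - 2, by omega⟩
  have e1 : N + 2 - 1 = N + 1 := rfl
  have e2 : N + 2 - 2 = N := rfl
  rw [e1] at hlt
  rw [e1, e2]
  obtain ⟨k, hk⟩ := hwpre
  obtain ⟨s, hs⟩ := hb_prefix_succ m hm N
  have htb : tb m (N+2) = s.reverse := by
    unfold tb
    rw [e1, e2, ← hs, List.reverse_append]
    have hlen2 : (hb m N ++ s).length - (hb m N).length = s.reverse.length := by simp
    rw [hlen2]
    exact List.take_left
  have hrev : (hb m (N+1)).reverse = tb m (N+2) ++ (hb m N).reverse := by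
    rw [htb, ← hs, List.reverse_append]
  have hubn : ub m (N+2) = (ub m (N+1) ++ tb m (N+2)) ++ (hb m N).reverse := by
    rw [ub_alt m hm (N+1), hrev, List.append_assoc]
  have hub1 : ub m (N+1) = ub m N ++ (hb m N).reverse := ub_alt m hm N
  have hw_ub : w <+: ub m (N+2) :=
    List.prefix_of_prefix_length_le
      (hk.trans (hb_prefix_mono m hm (le_max_left k (N+3))))
      ((ub_prefix_hb m hm (N+2)).trans (hb_prefix_mono m hm (le_max_right k (N+3))))
      hle
  have hpre : ub m (N+1) ++ tb m (N+2) <+: w := by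
    refine List.prefix_of_prefix_length_le ?_ hw_ub ?_
    · rw [hubn]
      exact List.prefix_append _ _
    · rw [List.length_append]
      omega
  obtain ⟨x, hxw⟩ := hpre
  have hxlen : 0 < x.length := by
    have := congrArg List.length hxw
    simp at this
    omega
  have hx_pre : x <+: (hb m N).reverse := by
    obtain ⟨r, hr⟩ := hw_ub
    rw [← hxw, hubn, List.append_assoc] at hr
    exact ⟨r, List.append_cancel_left hr⟩
  obtain ⟨q, hq⟩ := hb_last m hm N
  have hrevN : (hb m N).reverse = (N % m) :: q.reverse := by rw [hq]; simp
  obtain ⟨x', rfl⟩ : ∃ x', x = (N % m) :: x' := by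
    cases x with
    | nil => simp at hxlen
    | cons x0 x'' =>
      rw [hrevN, List.cons_prefix_cons] at hx_pre
      exact ⟨x'', by rw [hx_pre.1]⟩
  have hut : ub m (N+1) ++ tb m (N+2) = hb m (N+1) ++ ub m N := by
    apply List.append_cancel_right (bs := (hb m N).reverse)
    rw [← hubn, List.append_assoc, ← hub1, ← ub_succ]
  have hwB : w = hb m (N+1) ++ (ub m N ++ ((N % m) :: x')) := by
    rw [← hxw, hut, List.append_assoc]
  have hsuf : (ub m N ++ ((N % m) :: x')) <:+ w := ⟨hb m (N+1), hwB.symm⟩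
  have hBpre_u : (ub m N ++ ((N % m) :: x')) <+: ub m (N+1) := by
    rw [hub1]
    exact (List.prefix_append_right_inj _).mpr hx_pre
  have hu_w : ub m (N+1) <+: w := by
    rw [← hxw, List.append_assoc]
    exact List.prefix_append _ _
  have hpref : (ub m N ++ ((N % m) :: x')) <+: w := hBpre_u.trans hu_w
  have hWw : (hb m (N+1) ++ ub m N ++ [N % m]) <+: w := by
    refine ⟨x', ?_⟩
    rw [hwB]
    simp [List.append_assoc]
  have hlenw : w.length = (hb m (N+1)).length + (ub m N ++ ((N % m) :: x')).length := by
    rw [hwB]; simp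
  have hall : ∀ i, (ub m N ++ ((N % m) :: x')) <+: w.drop i →
      i = 0 ∨ i = (hb m (N+1)).length := by
    intro i hi
    have hBlen : 0 < (ub m N ++ ((N % m) :: x')).length := by simp
    have hile : i + (ub m N ++ ((N % m) :: x')).length ≤ w.length := by
      have h1 := hi.length_le
      rw [List.length_drop] at h1
      by_cases hii : i ≤ w.length
      · omega
      · exfalso
        rw [List.drop_eq_nil_of_le (by omega)] at hi
        have := hi.length_le
        simp at this
    have hiF : i ≤ (hb m (N+1)).length := by
      rw [hlenw] at hile
      omega
    have hPB : (ub m N ++ [N % m]) <+: (ub m N ++ ((N % m) :: x')) :=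
      ⟨x', by simp⟩
    obtain ⟨rr, hrr⟩ := hWw
    have hiW : i ≤ (hb m (N+1) ++ ub m N ++ [N % m]).length := by
      simp only [List.length_append, List.length_cons, List.length_nil]
      omega
    have hdropw : w.drop i = (hb m (N+1) ++ ub m N ++ [N % m]).drop i ++ rr := by
      rw [← hrr, List.drop_append_of_le_length hiW]
    have hP_w : (ub m N ++ [N % m]) <+: w.drop i := hPB.trans hi
    have hPdrop : (ub m N ++ [N % m]) <+: (hb m (N+1) ++ ub m N ++ [N % m]).drop i := by
      apply List.prefix_of_prefix_length_le (hdropw ▸ hP_w) (List.prefix_append _ _)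
      rw [List.length_drop]
      simp only [List.length_append, List.length_cons, List.length_nil]
      omega
    exact Rlem m hm N i hPdrop
  have hocc2 : occ (ub m N ++ ((N % m) :: x')) w = 2 := by
    apply occ_pair _ w (hb m (N+1)).length (hb_len_pos m hm (N+1)) (by omega) hall hpref
    rw [hwB, List.drop_left]
  refine ⟨Or.inr ⟨_, by simp, by have := hb_len_pos m hm (N+1); omega, hpref, hsuf, hocc2⟩,
    (N % m) :: x', by simp, ?_, ?_, hpref, hsuf, hocc2⟩
  · rw [hrevN]
    rw [hrevN] at hx_pre
    exact hx_pre
  · rw [← hxw, List.append_assoc]
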